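/- Let $\bar{\varrho}_1, \bar{\varrho}_2 > 0$ and let $h_1, h_2 : \mathbb{R} \to \mathbb{R}$ be differentiable on $[0,\infty)$ with $h_1(0) > 0$, $h_2(0) > 0$, and satisfying for all $t \ge 0$: $h_1'(t) \ge -\bar{\varrho}_1 (1+t)\, h_1(t) + h_2(t)$ and $h_2'(t) \ge -\bar{\varrho}_2 (1+t)\, h_2(t)$. Then for all $t \ge 0$, $h_1(t) \ge h_1(0)\,\exp\big(-\bar{\varrho}_1\big(\tfrac{t^2}{2} + t\big)\big) > 0$. -/
import Mathlib

private lemma mono_aux (f f' : ℝ → ℝ) (hf : ∀ t, 0 ≤ t → HasDerivAt f (f' t) t)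
    (hnn : ∀ t, 0 ≤ t → 0 ≤ f' t) : ∀ t, 0 ≤ t → f 0 ≤ f t := by
  intro t ht
  have hmono : MonotoneOn f (Set.Ici (0:ℝ)) := by
    apply monotoneOn_of_deriv_nonneg (convex_Ici 0)
    · exact fun x hx => (hf x hx).continuousAt.continuousWithinAt
    · intro x hx
      rw [interior_Ici] at hx
      exact (hf x (le_of_lt hx)).differentiableAt.differentiableWithinAt
    · intro x hx
      rw [interior_Ici] at hx
      rw [(hf x (le_of_lt hx)).deriv]
      exact hnn x (le_of_lt hx)
  exact hmono (Set.self_mem_Ici) ht ht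

private lemma exp_deriv_aux (c t : ℝ) :
    HasDerivAt (fun s => Real.exp (c * (s ^ 2 / 2 + s))) (c * (1 + t) * Real.exp (c * (t ^ 2 / 2 + t))) t := by
  have h1 : HasDerivAt (fun s : ℝ => c * (s ^ 2 / 2 + s)) (c * (1 + t)) t := by
    have := (((hasDerivAt_pow 2 t).div_const 2).add (hasDerivAt_id t)).const_mul c
    simpa [mul_comm, mul_assoc, add_comm] using this
  simpa [mul_comm] using h1.exp

/-- Hyperexponential estimate for the double integrator with gain `Υ(t) = 1 + t` and
`t₀ = 0`: if `h₁(0) > 0`, `h₂(0) > 0`, `h₁' ≥ -ϱ̄₁(1+t)h₁ + h₂` and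
`h₂' ≥ -ϱ̄₂(1+t)h₂` on `[0, ∞)`, then `h₁(t) ≥ h₁(0) exp(-ϱ̄₁(t²/2 + t)) > 0`. -/
theorem double_integrator_hyperexponential (ϱ1 ϱ2 : ℝ) (hϱ1 : 0 < ϱ1) (hϱ2 : 0 < ϱ2)
    (h1 h2 h1' h2' : ℝ → ℝ)
    (hd1 : ∀ t, 0 ≤ t → HasDerivAt h1 (h1' t) t)
    (hd2 : ∀ t, 0 ≤ t → HasDerivAt h2 (h2' t) t)
    (hi1 : 0 < h1 0) (hi2 : 0 < h2 0)
    (hineq1 : ∀ t, 0 ≤ t → h1' t ≥ -ϱ1 * (1 + t) * h1 t + h2 t)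
    (hineq2 : ∀ t, 0 ≤ t → h2' t ≥ -ϱ2 * (1 + t) * h2 t) :
    ∀ t, 0 ≤ t →
      h1 t ≥ h1 0 * Real.exp (-ϱ1 * (t ^ 2 / 2 + t)) ∧
      0 < h1 0 * Real.exp (-ϱ1 * (t ^ 2 / 2 + t)) := by
  -- g2 t = h2 t * exp (ϱ2 * (t²/2 + t)) is nondecreasing
  set E2 : ℝ → ℝ := fun s => Real.exp (ϱ2 * (s ^ 2 / 2 + s)) with hE2
  have hg2 : ∀ t, 0 ≤ t → h2 0 ≤ h2 t * E2 t := by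
    have := mono_aux (fun s => h2 s * E2 s)
      (fun s => h2' s * E2 s + h2 s * (ϱ2 * (1 + s) * E2 s))
      (fun s hs => (hd2 s hs).mul (exp_deriv_aux ϱ2 s))
      (fun s hs => by
        have hE : 0 < E2 s := Real.exp_pos _
        have := hineq2 s hs
        show (0:ℝ) ≤ h2' s * E2 s + h2 s * (ϱ2 * (1 + s) * E2 s)
        nlinarith [hE.le, mul_le_mul_of_nonneg_right this hE.le])
    intro t ht
    have h0 := this t ht
    simpa [hE2] using h0
  have hh2pos : ∀ t, 0 ≤ t → 0 < h2 t := by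
    intro t ht
    have := hg2 t ht
    have hE : 0 < E2 t := Real.exp_pos _
    nlinarith
  -- g1 t = h1 t * exp (ϱ1 * (t²/2 + t)) is nondecreasing
  set E1 : ℝ → ℝ := fun s => Real.exp (ϱ1 * (s ^ 2 / 2 + s)) with hE1
  have hg1 : ∀ t, 0 ≤ t → h1 0 ≤ h1 t * E1 t := by
    have := mono_aux (fun s => h1 s * E1 s)
      (fun s => h1' s * E1 s + h1 s * (ϱ1 * (1 + s) * E1 s))
      (fun s hs => (hd1 s hs).mul (exp_deriv_aux ϱ1 s))
      (fun s hs => by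
        have hE : 0 < E1 s := Real.exp_pos _
        have h := hineq1 s hs
        have hp := (hh2pos s hs)
        show (0:ℝ) ≤ h1' s * E1 s + h1 s * (ϱ1 * (1 + s) * E1 s)
        nlinarith [mul_le_mul_of_nonneg_right h hE.le, mul_pos hp hE])
    intro t ht
    have h0 := this t ht
    simpa [hE1] using h0
  intro t ht
  have hE : 0 < E1 t := Real.exp_pos _
  have hEq : Real.exp (-ϱ1 * (t ^ 2 / 2 + t)) = (E1 t)⁻¹ := by
    rw [hE1]; rw [← Real.exp_neg]; ring_nf
  constructor
  · have := hg1 t ht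
    rw [ge_iff_le, hEq]
    rw [mul_inv_le_iff₀ hE]
    linarith
  · rw [hEq]
    positivity
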